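/- Let Ω ⊂ ℝⁿ be a bounded domain, q ≥ 1, 0 < θ̄ < n, 0 < τ < θ̄, and let f : ℝⁿ → ℝ be measurable, vanishing outside Ω, with finite Morrey norm ‖f‖_{L^{q,θ̄}(Ω)}. Fix x₀ ∈ Ω and 0 < r ≤ diam(Ω), and set ω(x) = min{ |x−x₀|^{−n+θ̄−τ}, r^{−n+θ̄−τ} }. Then ( ∫_{ℝⁿ} |f(x)|^q ω(x) dx )^{1/q} ≤ 2 · max{ 1, 2^{(n+τ−θ̄)/q} / (2^{τ/q} − 1) } · r^{−τ/q} · ‖f‖_{L^{q,θ̄}(Ω)}. -/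

import Mathlib

open Set MeasureTheory

variable {n : ℕ}

/-- The set of quantities whose supremum defines the Morrey norm `‖f‖_{L^{q,θ}(Ω)}`. -/
def morreySet (Ω : Set (EuclideanSpace ℝ (Fin n))) (q θ : ℝ)
    (f : EuclideanSpace ℝ (Fin n) → ℝ) : Set ℝ :=
  {y | ∃ x₀ ∈ Ω, ∃ r : ℝ, 0 < r ∧ r ≤ Metric.diam Ω ∧
    y = (r ^ (-((n : ℝ) - θ)) * ∫ x in Ω ∩ Metric.ball x₀ r, |f x| ^ q) ^ (1 / q)}

/-- The Morrey norm `‖f‖_{L^{q,θ}(Ω)}`. -/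
noncomputable def morreyNorm (Ω : Set (EuclideanSpace ℝ (Fin n))) (q θ : ℝ)
    (f : EuclideanSpace ℝ (Fin n) → ℝ) : ℝ :=
  sSup (morreySet Ω q θ f)

/-- Superadditivity of `x ^ p` for `p ≥ 1` on nonnegative reals. -/
lemma aux_rpow_superadd {x y p : ℝ} (hx : 0 ≤ x) (hy : 0 ≤ y) (hp : 1 ≤ p) :
    x ^ p + y ^ p ≤ (x + y) ^ p := by
  have hp0 : 0 < p := lt_of_lt_of_le one_pos hp
  have h1 : (0:ℝ) ≤ 1 / p := by positivity
  have h2 : 1 / p ≤ 1 := by rw [div_le_one hp0]; exact hp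
  have key : ∀ a b : NNReal, a ^ p + b ^ p ≤ (a + b) ^ p := by
    intro a b
    have h := NNReal.rpow_add_le_add_rpow (a ^ p) (b ^ p) h1 h2
    have ha : (a ^ p) ^ (1/p) = a := by
      rw [← NNReal.rpow_mul, mul_one_div, div_self hp0.ne', NNReal.rpow_one]
    have hb : (b ^ p) ^ (1/p) = b := by
      rw [← NNReal.rpow_mul, mul_one_div, div_self hp0.ne', NNReal.rpow_one]
    rw [ha, hb] at h
    calc a ^ p + b ^ p = ((a ^ p + b ^ p) ^ (1/p)) ^ p := by
          rw [← NNReal.rpow_mul, one_div_mul_cancel hp0.ne', NNReal.rpow_one]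
      _ ≤ (a + b) ^ p := NNReal.rpow_le_rpow h hp0.le
  have h := key x.toNNReal y.toNNReal
  have hx' : ((x.toNNReal : ℝ)) = x := Real.coe_toNNReal x hx
  have hy' : ((y.toNNReal : ℝ)) = y := Real.coe_toNNReal y hy
  have := NNReal.coe_le_coe.mpr h
  rwa [NNReal.coe_add, NNReal.coe_rpow, NNReal.coe_rpow, NNReal.coe_rpow, NNReal.coe_add,
    hx', hy'] at this

/-- Weighted bound: with `ω(x) = min{|x−x₀|^{−n+θ̄−τ}, r^{−n+θ̄−τ}}`,
`(∫_{ℝⁿ} |f|^q ω)^{1/q} ≤ 2 max{1, 2^{(n+τ−θ̄)/q}/(2^{τ/q}−1)} r^{−τ/q} ‖f‖_{L^{q,θ̄}(Ω)}`. -/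
theorem morrey_weighted_estimate (hn : 1 ≤ n)
    (Ω : Set (EuclideanSpace ℝ (Fin n))) (hΩm : MeasurableSet Ω)
    (hΩb : Bornology.IsBounded Ω) (hΩne : Ω.Nonempty)
    (q θ τ : ℝ) (hq : 1 ≤ q) (hθ : 0 < θ) (hθn : θ < n) (hτ : 0 < τ) (hτθ : τ < θ)
    (f : EuclideanSpace ℝ (Fin n) → ℝ) (hf : Measurable f)
    (hf0 : ∀ x ∉ Ω, f x = 0) (hbdd : BddAbove (morreySet Ω q θ f))
    (x₀ : EuclideanSpace ℝ (Fin n)) (hx₀ : x₀ ∈ Ω)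
    (r : ℝ) (hr : 0 < r) (hrd : r ≤ Metric.diam Ω) :
    (∫ x, |f x| ^ q * min (‖x - x₀‖ ^ (-(n : ℝ) + θ - τ)) (r ^ (-(n : ℝ) + θ - τ))) ^ (1 / q)
      ≤ 2 * max 1 ((2 : ℝ) ^ (((n : ℝ) + τ - θ) / q) / ((2 : ℝ) ^ (τ / q) - 1)) *
        r ^ (-τ / q) * morreyNorm Ω q θ f := by
  classical
  have hq0 : 0 < q := lt_of_lt_of_le one_pos hq
  set α : ℝ := -(n : ℝ) + θ - τ with hαdef
  have hθn' : θ < (n : ℝ) := hθn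
  have hα0 : α < 0 := by simp only [hαdef]; linarith
  set M : ℝ := morreyNorm Ω q θ f with hMdef
  set D : ℝ := (2 : ℝ) ^ (((n : ℝ) + τ - θ) / q) / ((2 : ℝ) ^ (τ / q) - 1) with hDdef
  set ω : EuclideanSpace ℝ (Fin n) → ℝ := fun x => min (‖x - x₀‖ ^ α) (r ^ α) with hωdef
  set g : EuclideanSpace ℝ (Fin n) → ℝ := fun x => |f x| ^ q * ω x with hgdef
  have hω0 : ∀ x, 0 ≤ ω x := fun x =>
    le_min (Real.rpow_nonneg (norm_nonneg _) _) (Real.rpow_nonneg hr.le _)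
  have hg0 : ∀ x, 0 ≤ g x := fun x =>
    mul_nonneg (Real.rpow_nonneg (abs_nonneg _) _) (hω0 x)
  -- nonnegativity of the Morrey norm
  have hM0 : 0 ≤ M := by
    have hmem : ((r : ℝ) ^ (-((n : ℝ) - θ)) *
        ∫ x in Ω ∩ Metric.ball x₀ r, |f x| ^ q) ^ (1 / q) ∈ morreySet Ω q θ f :=
      ⟨x₀, hx₀, r, hr, hrd, rfl⟩
    have h1 : (0:ℝ) ≤ ((r : ℝ) ^ (-((n : ℝ) - θ)) *
        ∫ x in Ω ∩ Metric.ball x₀ r, |f x| ^ q) ^ (1 / q) := by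
      apply Real.rpow_nonneg
      exact mul_nonneg (Real.rpow_nonneg hr.le _)
        (setIntegral_nonneg (hΩm.inter measurableSet_ball)
          (fun x _ => Real.rpow_nonneg (abs_nonneg _) _))
    exact le_trans h1 (le_csSup hbdd hmem)
  have hD0 : 0 ≤ D := by
    have h1 : (1:ℝ) < (2:ℝ) ^ (τ / q) := by
      rw [show (1:ℝ) = (2:ℝ) ^ (0:ℝ) by simp]
      exact Real.rpow_lt_rpow_of_exponent_lt one_lt_two (by positivity)
    exact div_nonneg (Real.rpow_nonneg (by norm_num) _) (by linarith)
  have hRHS0 : 0 ≤ 2 * max 1 D * r ^ (-τ / q) * M :=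
    mul_nonneg (mul_nonneg (mul_nonneg (by norm_num)
      (le_trans zero_le_one (le_max_left _ _))) (Real.rpow_nonneg hr.le _)) hM0
  -- the key Morrey-norm bound on balls
  have hdiam : 0 < Metric.diam Ω := lt_of_lt_of_le hr hrd
  haveI : Nontrivial (EuclideanSpace ℝ (Fin n)) := by
    haveI : Nonempty (Fin n) := ⟨⟨0, hn⟩⟩
    infer_instance
  have key₁ : ∀ R : ℝ, 0 < R → R ≤ Metric.diam Ω →
      ∫ x in Ω ∩ Metric.ball x₀ R, |f x| ^ q ≤ R ^ ((n : ℝ) - θ) * M ^ q := by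
    intro R hR hRle
    have hmem : ((R : ℝ) ^ (-((n : ℝ) - θ)) *
        ∫ x in Ω ∩ Metric.ball x₀ R, |f x| ^ q) ^ (1 / q) ∈ morreySet Ω q θ f :=
      ⟨x₀, hx₀, R, hR, hRle, rfl⟩
    have hy : ((R : ℝ) ^ (-((n : ℝ) - θ)) *
        ∫ x in Ω ∩ Metric.ball x₀ R, |f x| ^ q) ^ (1 / q) ≤ M := le_csSup hbdd hmem
    have hint0 : 0 ≤ ∫ x in Ω ∩ Metric.ball x₀ R, |f x| ^ q :=
      setIntegral_nonneg (hΩm.inter measurableSet_ball)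
        (fun x _ => Real.rpow_nonneg (abs_nonneg _) _)
    have hbase : 0 ≤ (R : ℝ) ^ (-((n : ℝ) - θ)) *
        ∫ x in Ω ∩ Metric.ball x₀ R, |f x| ^ q :=
      mul_nonneg (Real.rpow_nonneg hR.le _) hint0
    have hyq := Real.rpow_le_rpow (Real.rpow_nonneg hbase _) hy hq0.le
    rw [← Real.rpow_mul hbase, one_div_mul_cancel hq0.ne', Real.rpow_one] at hyq
    have hRR : R ^ ((n : ℝ) - θ) * R ^ (-((n : ℝ) - θ)) = 1 := by
      rw [← Real.rpow_add hR]; norm_num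
    calc ∫ x in Ω ∩ Metric.ball x₀ R, |f x| ^ q
        = R ^ ((n : ℝ) - θ) * (R ^ (-((n : ℝ) - θ)) *
            ∫ x in Ω ∩ Metric.ball x₀ R, |f x| ^ q) := by
          rw [← mul_assoc, hRR, one_mul]
      _ ≤ R ^ ((n : ℝ) - θ) * M ^ q :=
          mul_le_mul_of_nonneg_left hyq (Real.rpow_nonneg hR.le _)
  have key : ∀ R : ℝ, 0 < R →
      ∫ x in Ω ∩ Metric.ball x₀ R, |f x| ^ q ≤ R ^ ((n : ℝ) - θ) * M ^ q := by
    intro R hR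
    rcases le_or_gt R (Metric.diam Ω) with hRle | hRgt
    · exact key₁ R hR hRle
    · have hae : (Ω ∩ Metric.ball x₀ R : Set (EuclideanSpace ℝ (Fin n))) =ᵐ[volume]
          (Ω ∩ Metric.ball x₀ (Metric.diam Ω) : Set (EuclideanSpace ℝ (Fin n))) := by
        refine (MeasureTheory.ae_eq_set
          (μ := (volume : Measure (EuclideanSpace ℝ (Fin n))))).mpr ⟨?_, ?_⟩
        · apply measure_mono_null (t := Metric.sphere x₀ (Metric.diam Ω))
          · rintro x ⟨⟨hxΩ, _⟩, hx2⟩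
            have h1 : dist x x₀ ≤ Metric.diam Ω := Metric.dist_le_diam_of_mem hΩb hxΩ hx₀
            have h2 : ¬ dist x x₀ < Metric.diam Ω := fun hc => hx2 ⟨hxΩ, hc⟩
            simp only [Metric.mem_sphere]
            linarith [not_lt.mp h2]
          · exact Measure.addHaar_sphere volume x₀ _
        · have : (Ω ∩ Metric.ball x₀ (Metric.diam Ω)) \ (Ω ∩ Metric.ball x₀ R) = ∅ := by
            apply diff_eq_empty.mpr
            exact inter_subset_inter_right Ω (Metric.ball_subset_ball hRgt.le)
          rw [this]; simp
      rw [setIntegral_congr_set hae]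
      calc ∫ x in Ω ∩ Metric.ball x₀ (Metric.diam Ω), |f x| ^ q
          ≤ (Metric.diam Ω) ^ ((n : ℝ) - θ) * M ^ q := key₁ _ hdiam le_rfl
        _ ≤ R ^ ((n : ℝ) - θ) * M ^ q := by
            apply mul_le_mul_of_nonneg_right _ (Real.rpow_nonneg (by positivity) _)
            exact Real.rpow_le_rpow hdiam.le hRgt.le (by linarith)
  -- main case split on integrability
  by_cases hgint : Integrable g volume
  case neg =>
    have : ∫ x, g x = 0 := integral_undef hgint
    rw [show (∫ x, |f x| ^ q * min (‖x - x₀‖ ^ α) (r ^ α)) = ∫ x, g x from rfl, this,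
      Real.zero_rpow (by positivity : (1:ℝ)/q ≠ 0)]
    exact hRHS0
  case pos =>
  -- integrability of |f|^q on balls
  have hA : ∀ R : ℝ, r ≤ R → IntegrableOn (fun x => |f x| ^ q) (Ω ∩ Metric.ball x₀ R) volume := by
    intro R hRle
    have hR : 0 < R := lt_of_lt_of_le hr hRle
    have hc : 0 < R ^ α := Real.rpow_pos_of_pos hR α
    have hmeas : MeasurableSet ((Ω ∩ Metric.ball x₀ R) \ {x₀}) :=
      (hΩm.inter measurableSet_ball).diff (measurableSet_singleton x₀)
    have h1 : IntegrableOn (fun x => |f x| ^ q) ((Ω ∩ Metric.ball x₀ R) \ {x₀}) volume := by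
      apply Integrable.mono' ((hgint.integrableOn).const_mul ((R ^ α)⁻¹))
      · exact ((hf.abs.pow_const q).aestronglyMeasurable)
      · filter_upwards [ae_restrict_mem hmeas] with x hx
        rcases hx with ⟨⟨hxΩ, hxball⟩, hxne⟩
        have hx0 : x ≠ x₀ := fun h => hxne (by simp [h])
        have hxpos : 0 < ‖x - x₀‖ := by
          rw [norm_pos_iff]; exact sub_ne_zero_of_ne hx0
        have hxlt : ‖x - x₀‖ < R := by
          have := Metric.mem_ball.mp hxball
          rwa [dist_eq_norm] at this
        have hω1 : R ^ α ≤ ‖x - x₀‖ ^ α :=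
          Real.rpow_le_rpow_of_nonpos hxpos hxlt.le hα0.le
        have hω2 : R ^ α ≤ r ^ α :=
          Real.rpow_le_rpow_of_nonpos hr hRle hα0.le
        have hωR : R ^ α ≤ ω x := le_min hω1 hω2
        have hfq : (0:ℝ) ≤ |f x| ^ q := Real.rpow_nonneg (abs_nonneg _) _
        rw [Real.norm_eq_abs, abs_of_nonneg hfq]
        calc |f x| ^ q = (|f x| ^ q * R ^ α) * (R ^ α)⁻¹ := by
              field_simp
          _ ≤ g x * (R ^ α)⁻¹ := by
              apply mul_le_mul_of_nonneg_right _ (inv_nonneg.mpr hc.le)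
              exact mul_le_mul_of_nonneg_left hωR hfq |>.trans_eq rfl
          _ = (R ^ α)⁻¹ * g x := mul_comm _ _
    have hae : (((Ω ∩ Metric.ball x₀ R) \ {x₀} : Set (EuclideanSpace ℝ (Fin n)))) =ᵐ[volume]
        (Ω ∩ Metric.ball x₀ R : Set (EuclideanSpace ℝ (Fin n))) := by
      refine (MeasureTheory.ae_eq_set
        (μ := (volume : Measure (EuclideanSpace ℝ (Fin n))))).mpr
        ⟨by simp [diff_eq_empty.mpr diff_subset], ?_⟩
      apply measure_mono_null (t := Metric.sphere x₀ 0)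
      · rw [Metric.sphere_zero]
        intro x hx
        simp only [mem_diff, mem_singleton_iff, not_and, not_not] at hx ⊢
        by_contra hne
        exact hne (hx.2 hx.1)
      · exact Measure.addHaar_sphere volume x₀ 0
    exact h1.congr_set_ae hae.symm

  -- dyadic decomposition
  set t : ℕ → Set (EuclideanSpace ℝ (Fin n)) := fun j => Metric.ball x₀ (2 ^ j * r) with htdef
  have htmono : Monotone t := fun i j hij =>
    Metric.ball_subset_ball (mul_le_mul_of_nonneg_right
      (pow_le_pow_right₀ one_le_two hij) hr.le)
  have htunion : (⋃ j, t j) = univ := by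
    rw [eq_univ_iff_forall]
    intro x
    obtain ⟨j, hj⟩ := pow_unbounded_of_one_lt (dist x x₀ / r) (one_lt_two (α := ℝ))
    exact mem_iUnion.mpr ⟨j, Metric.mem_ball.mpr ((div_lt_iff₀ hr).mp hj)⟩
  have hsmeas : ∀ j, MeasurableSet (disjointed t j) :=
    MeasurableSet.disjointed (fun _ => measurableSet_ball)
  have hsum : HasSum (fun j => ∫ x in disjointed t j, g x) (∫ x, g x) := by
    have h := hasSum_integral_iUnion (μ := volume) (f := g) hsmeas (disjoint_disjointed t)
      (by rw [iUnion_disjointed, htunion]; exact integrableOn_univ.mpr hgint)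
    rwa [iUnion_disjointed, htunion, Measure.restrict_univ] at h
  -- generic one-piece estimate
  have hstep : ∀ (u : Set (EuclideanSpace ℝ (Fin n))) (c R : ℝ), MeasurableSet u →
      u ⊆ Metric.ball x₀ R → r ≤ R → 0 ≤ c → (∀ x ∈ u, ω x ≤ c) →
      ∫ x in u, g x ≤ c * (R ^ ((n : ℝ) - θ) * M ^ q) := by
    intro u c R hu husub hRle hc hωc
    have hR : 0 < R := lt_of_lt_of_le hr hRle
    have hind : IntegrableOn (fun x => Ω.indicator (fun y => c * |f y| ^ q) x) u volume := by
      rw [IntegrableOn, integrable_indicator_iff hΩm, IntegrableOn,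
        Measure.restrict_restrict hΩm]
      exact MeasureTheory.IntegrableOn.mono_set ((hA R hRle).const_mul c)
        (inter_subset_inter_right Ω husub)
    have h1 : ∫ x in u, g x ≤ ∫ x in u, Ω.indicator (fun y => c * |f y| ^ q) x := by
      apply setIntegral_mono_on (hgint.integrableOn) hind hu
      intro x hxu
      by_cases hxΩ : x ∈ Ω
      · rw [indicator_of_mem hxΩ]
        calc g x = |f x| ^ q * ω x := rfl
          _ ≤ |f x| ^ q * c :=
              mul_le_mul_of_nonneg_left (hωc x hxu) (Real.rpow_nonneg (abs_nonneg _) _)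
          _ = c * |f x| ^ q := mul_comm _ _
      · rw [indicator_of_notMem hxΩ]
        have hfx : f x = 0 := hf0 x hxΩ
        have : g x = 0 := by
          simp only [hgdef, hfx, abs_zero, Real.zero_rpow hq0.ne', zero_mul]
        rw [this]
    have h2 : ∫ x in u, Ω.indicator (fun y => c * |f y| ^ q) x
        = ∫ x in u ∩ Ω, c * |f x| ^ q := setIntegral_indicator hΩm
    have h3 : ∫ x in u ∩ Ω, c * |f x| ^ q = c * ∫ x in u ∩ Ω, |f x| ^ q :=
      integral_const_mul c _
    have h4 : ∫ x in u ∩ Ω, |f x| ^ q ≤ ∫ x in Ω ∩ Metric.ball x₀ R, |f x| ^ q := by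
      apply setIntegral_mono_set (hA R hRle)
      · exact Filter.Eventually.of_forall (fun x => Real.rpow_nonneg (abs_nonneg _) _)
      · exact HasSubset.Subset.eventuallyLE (fun x hx => ⟨hx.2, husub hx.1⟩)
    calc ∫ x in u, g x ≤ c * ∫ x in u ∩ Ω, |f x| ^ q := by rw [← h3, ← h2]; exact h1
      _ ≤ c * ∫ x in Ω ∩ Metric.ball x₀ R, |f x| ^ q := mul_le_mul_of_nonneg_left h4 hc
      _ ≤ c * (R ^ ((n : ℝ) - θ) * M ^ q) := mul_le_mul_of_nonneg_left (key R hR) hc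
  -- rpow bookkeeping helpers
  have hpow2 : ∀ (k : ℕ) (e : ℝ), ((2 : ℝ) ^ k) ^ e = (2 : ℝ) ^ ((k : ℝ) * e) := by
    intro k e
    rw [← Real.rpow_natCast 2 k, ← Real.rpow_mul (by norm_num)]
  have hpow2' : ∀ (e : ℝ) (k : ℕ), ((2 : ℝ) ^ e) ^ k = (2 : ℝ) ^ (e * (k : ℝ)) := by
    intro e k
    rw [← Real.rpow_natCast ((2 : ℝ) ^ e) k, ← Real.rpow_mul (by norm_num)]
  have h2add : ∀ a b : ℝ, (2 : ℝ) ^ a * (2 : ℝ) ^ b = 2 ^ (a + b) := fun a b =>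
    (Real.rpow_add two_pos a b).symm
  have hradd : ∀ a b : ℝ, r ^ a * r ^ b = r ^ (a + b) := fun a b =>
    (Real.rpow_add hr a b).symm
  set C : ℝ := (2 : ℝ) ^ ((n : ℝ) - θ) with hCdef
  set ρ : ℝ := (2 : ℝ) ^ (-τ) with hρdef
  have hρ0 : (0 : ℝ) ≤ ρ := Real.rpow_nonneg (by norm_num) _
  have hρ1 : ρ < 1 := Real.rpow_lt_one_of_one_lt_of_neg one_lt_two (by linarith)
  have hC0 : (0 : ℝ) ≤ C := Real.rpow_nonneg (by norm_num) _
  -- the term bounds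
  have hb0 : ∫ x in disjointed t 0, g x ≤ 1 * (r ^ (-τ) * M ^ q) := by
    have hs0 : disjointed t 0 = Metric.ball x₀ r := by
      rw [disjointed_zero, htdef]
      norm_num
    rw [hs0, one_mul]
    have hexpr : α + ((n : ℝ) - θ) = -τ := by rw [hαdef]; ring
    calc ∫ x in Metric.ball x₀ r, g x ≤ r ^ α * (r ^ ((n : ℝ) - θ) * M ^ q) :=
          hstep (Metric.ball x₀ r) (r ^ α) r measurableSet_ball (subset_refl _) le_rfl
            (Real.rpow_nonneg hr.le α) (fun x _ => min_le_right _ _)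
      _ = r ^ (-τ) * M ^ q := by rw [← mul_assoc, hradd, hexpr]
  have hbj : ∀ j : ℕ, ∫ x in disjointed t (j + 1), g x ≤
      C * ρ ^ j * (r ^ (-τ) * M ^ q) := by
    intro j
    have hsj : disjointed t (j + 1) = t (j + 1) \ t j := htmono.disjointed_succ (not_isMax j)
    have h2j : (0 : ℝ) < 2 ^ j * r := by positivity
    have hone : (1 : ℝ) ≤ 2 ^ (j + 1) := by
      have h := pow_le_pow_left₀ (zero_le_one (α := ℝ)) (one_le_two (α := ℝ)) (j + 1)
      simpa using h
    have hrle : r ≤ 2 ^ (j + 1) * r := le_mul_of_one_le_left hr.le hone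
    have hsub : disjointed t (j + 1) ⊆ Metric.ball x₀ (2 ^ (j + 1) * r) := by
      rw [hsj, htdef]; exact diff_subset
    have hωbound : ∀ x ∈ disjointed t (j + 1), ω x ≤ ((2 : ℝ) ^ j * r) ^ α := by
      intro x hx
      rw [hsj] at hx
      have hx2 : x ∉ Metric.ball x₀ (2 ^ j * r) := hx.2
      have hge : 2 ^ j * r ≤ ‖x - x₀‖ := by
        rw [← dist_eq_norm]
        exact not_lt.mp (fun hcon => hx2 (Metric.mem_ball.mpr hcon))
      calc ω x ≤ ‖x - x₀‖ ^ α := min_le_left _ _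
        _ ≤ ((2 : ℝ) ^ j * r) ^ α := Real.rpow_le_rpow_of_nonpos h2j hge hα0.le
    have hmain := hstep (disjointed t (j + 1)) (((2 : ℝ) ^ j * r) ^ α) (2 ^ (j + 1) * r)
      (hsmeas _) hsub hrle (Real.rpow_nonneg h2j.le _) hωbound
    refine hmain.trans (le_of_eq ?_)
    have e1 : ((2 : ℝ) ^ j * r) ^ α = 2 ^ ((j : ℝ) * α) * r ^ α := by
      rw [Real.mul_rpow (by positivity) hr.le, hpow2]
    have e2 : ((2 : ℝ) ^ (j + 1) * r) ^ ((n : ℝ) - θ)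
        = 2 ^ (((j : ℝ) + 1) * ((n : ℝ) - θ)) * r ^ ((n : ℝ) - θ) := by
      rw [Real.mul_rpow (by positivity) hr.le, hpow2]
      push_cast
      ring_nf
    rw [e1, e2, hCdef, hρdef, hpow2']
    have e3 : (j : ℝ) * α + ((j : ℝ) + 1) * ((n : ℝ) - θ)
        = ((n : ℝ) - θ) + (-τ) * (j : ℝ) := by rw [hαdef]; ring
    have e4 : α + ((n : ℝ) - θ) = -τ := by rw [hαdef]; ring
    calc 2 ^ ((j : ℝ) * α) * r ^ α * (2 ^ (((j : ℝ) + 1) * ((n : ℝ) - θ)) * r ^ ((n : ℝ) - θ) * M ^ q)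
        = (2 ^ ((j : ℝ) * α) * 2 ^ (((j : ℝ) + 1) * ((n : ℝ) - θ))) * ((r ^ α * r ^ ((n : ℝ) - θ)) * M ^ q) := by
          ring
      _ = 2 ^ (((n : ℝ) - θ) + (-τ) * (j : ℝ)) * (r ^ (-τ) * M ^ q) := by
          rw [h2add, hradd, e3, e4]
      _ = 2 ^ ((n : ℝ) - θ) * 2 ^ ((-τ) * (j : ℝ)) * (r ^ (-τ) * M ^ q) := by
          rw [h2add]
  -- summation
  have hbsum : Summable (fun j : ℕ => (Nat.casesOn j 1 fun i => C * ρ ^ i : ℝ)) := by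
    apply (summable_nat_add_iff 1).mp
    exact (summable_geometric_of_lt_one hρ0 hρ1).mul_left C
  have hbsum' : Summable (fun j : ℕ =>
      (Nat.casesOn j 1 fun i => C * ρ ^ i : ℝ) * (r ^ (-τ) * M ^ q)) := hbsum.mul_right _
  have htot : ∫ x, g x ≤ (1 + C * (1 - ρ)⁻¹) * (r ^ (-τ) * M ^ q) := by
    rw [← hsum.tsum_eq]
    have hbound : ∀ j : ℕ, ∫ x in disjointed t j, g x ≤
        (Nat.casesOn j 1 fun i => C * ρ ^ i : ℝ) * (r ^ (-τ) * M ^ q) := by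
      intro j
      cases j with
      | zero => exact hb0
      | succ i => exact hbj i
    calc ∑' j, ∫ x in disjointed t j, g x
        ≤ ∑' j : ℕ, (Nat.casesOn j 1 fun i => C * ρ ^ i : ℝ) * (r ^ (-τ) * M ^ q) :=
          Summable.tsum_le_tsum hbound hsum.summable hbsum'
      _ = (∑' j : ℕ, (Nat.casesOn j 1 fun i => C * ρ ^ i : ℝ)) * (r ^ (-τ) * M ^ q) :=
          tsum_mul_right
      _ = (1 + C * (1 - ρ)⁻¹) * (r ^ (-τ) * M ^ q) := by
          congr 1
          rw [Summable.tsum_eq_zero_add hbsum]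
          simp only []
          rw [tsum_mul_left, tsum_geometric_of_lt_one hρ0 hρ1]
          norm_num
  -- final arithmetic
  have hMq0 : (0 : ℝ) ≤ M ^ q := Real.rpow_nonneg hM0 q
  have h2τq : (1 : ℝ) < (2 : ℝ) ^ (τ / q) := by
    rw [show (1 : ℝ) = (2 : ℝ) ^ (0 : ℝ) by simp]
    exact Real.rpow_lt_rpow_of_exponent_lt one_lt_two (by positivity)
  have h2τ : (1 : ℝ) < (2 : ℝ) ^ τ := by
    rw [show (1 : ℝ) = (2 : ℝ) ^ (0 : ℝ) by simp]
    exact Real.rpow_lt_rpow_of_exponent_lt one_lt_two hτ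
  have hfrac : C * (1 - ρ)⁻¹ = (2 : ℝ) ^ ((n : ℝ) + τ - θ) / ((2 : ℝ) ^ τ - 1) := by
    have h2τ0 : (0 : ℝ) < (2 : ℝ) ^ τ := Real.rpow_pos_of_pos two_pos τ
    have h1ρ : 1 - ρ = ((2 : ℝ) ^ τ - 1) / (2 : ℝ) ^ τ := by
      rw [hρdef, Real.rpow_neg (by norm_num)]
      field_simp
    rw [h1ρ, inv_div, hCdef, ← mul_div_assoc, h2add,
      show (n : ℝ) - θ + τ = (n : ℝ) + τ - θ from by ring]
  have hmaxq1 : (1 : ℝ) ≤ (max 1 D) ^ q := by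
    have h := Real.rpow_le_rpow zero_le_one (le_max_left 1 D) hq0.le
    rwa [Real.one_rpow] at h
  have hden : ((2 : ℝ) ^ (τ / q) - 1) ^ q ≤ (2 : ℝ) ^ τ - 1 := by
    have h := aux_rpow_superadd (x := (2 : ℝ) ^ (τ / q) - 1) (y := 1)
      (by linarith) zero_le_one hq
    rw [Real.one_rpow, sub_add_cancel] at h
    have hq2 : ((2 : ℝ) ^ (τ / q)) ^ q = (2 : ℝ) ^ τ := by
      rw [← Real.rpow_mul (by norm_num), div_mul_cancel₀ _ hq0.ne']
    rw [hq2] at h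
    linarith
  have hDq : (2 : ℝ) ^ ((n : ℝ) + τ - θ) / ((2 : ℝ) ^ τ - 1) ≤ (max 1 D) ^ q := by
    have hnum : ((2 : ℝ) ^ (((n : ℝ) + τ - θ) / q)) ^ q = (2 : ℝ) ^ ((n : ℝ) + τ - θ) := by
      rw [← Real.rpow_mul (by norm_num), div_mul_cancel₀ _ hq0.ne']
    have hDqeq : D ^ q = (2 : ℝ) ^ ((n : ℝ) + τ - θ) / (((2 : ℝ) ^ (τ / q) - 1) ^ q) := by
      rw [hDdef, Real.div_rpow (Real.rpow_nonneg (by norm_num) _) (by linarith), hnum]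
    have hdenpos : (0 : ℝ) < ((2 : ℝ) ^ (τ / q) - 1) ^ q :=
      Real.rpow_pos_of_pos (by linarith) q
    calc (2 : ℝ) ^ ((n : ℝ) + τ - θ) / ((2 : ℝ) ^ τ - 1)
        ≤ (2 : ℝ) ^ ((n : ℝ) + τ - θ) / (((2 : ℝ) ^ (τ / q) - 1) ^ q) := by
          gcongr
      _ = D ^ q := hDqeq.symm
      _ ≤ (max 1 D) ^ q := Real.rpow_le_rpow hD0 (le_max_right _ _) hq0.le
  have h2q : (2 : ℝ) ≤ (2 : ℝ) ^ q := by
    calc (2 : ℝ) = (2 : ℝ) ^ (1 : ℝ) := (Real.rpow_one 2).symm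
      _ ≤ (2 : ℝ) ^ q := Real.rpow_le_rpow_of_exponent_le one_le_two hq
  have hexp : (2 * max 1 D * r ^ (-τ / q) * M) ^ q
      = (2 : ℝ) ^ q * (max 1 D) ^ q * r ^ (-τ) * M ^ q := by
    have hmax0 : (0 : ℝ) ≤ max 1 D := le_trans zero_le_one (le_max_left 1 D)
    rw [Real.mul_rpow (by positivity) hM0,
      Real.mul_rpow (by positivity) (Real.rpow_nonneg hr.le _),
      Real.mul_rpow (by norm_num) hmax0,
      ← Real.rpow_mul hr.le, div_mul_cancel₀ _ hq0.ne']
  have hKq : (1 + C * (1 - ρ)⁻¹) * (r ^ (-τ) * M ^ q)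
      ≤ (2 * max 1 D * r ^ (-τ / q) * M) ^ q := by
    rw [hexp, hfrac]
    have hmaxq0 : (0 : ℝ) ≤ (max 1 D) ^ q := by linarith
    have hfinal : 1 + (2 : ℝ) ^ ((n : ℝ) + τ - θ) / ((2 : ℝ) ^ τ - 1)
        ≤ (2 : ℝ) ^ q * (max 1 D) ^ q := by
      calc 1 + (2 : ℝ) ^ ((n : ℝ) + τ - θ) / ((2 : ℝ) ^ τ - 1)
          ≤ (max 1 D) ^ q + (max 1 D) ^ q := add_le_add hmaxq1 hDq
        _ = 2 * (max 1 D) ^ q := by ring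
        _ ≤ (2 : ℝ) ^ q * (max 1 D) ^ q := mul_le_mul_of_nonneg_right h2q hmaxq0
    calc (1 + (2 : ℝ) ^ ((n : ℝ) + τ - θ) / ((2 : ℝ) ^ τ - 1)) * (r ^ (-τ) * M ^ q)
        ≤ ((2 : ℝ) ^ q * (max 1 D) ^ q) * (r ^ (-τ) * M ^ q) :=
          mul_le_mul_of_nonneg_right hfinal
            (mul_nonneg (Real.rpow_nonneg hr.le _) hMq0)
      _ = (2 : ℝ) ^ q * (max 1 D) ^ q * r ^ (-τ) * M ^ q := by ring
  -- wrap up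
  have hI0 : (0 : ℝ) ≤ ∫ x, g x := integral_nonneg hg0
  have hIle : ∫ x, g x ≤ (2 * max 1 D * r ^ (-τ / q) * M) ^ q := le_trans htot hKq
  have hfin := Real.rpow_le_rpow hI0 hIle (by positivity : (0 : ℝ) ≤ 1 / q)
  rw [← Real.rpow_mul hRHS0, mul_one_div, div_self hq0.ne', Real.rpow_one] at hfin
  exact hfin
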